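/- arXiv:1606.04551 — 2 statements merged into one kernel-verified Lean document; each statement's English description precedes it below -/
import Mathlib

section
/- The Krasnosel'skii–Mann iteration x_{k+1} = x_k + η(T(x_k) - x_k) with η ∈ (0,1) and T nonexpansive with a fixed point satisfies the fixed-point residual bound: Σ_{k=0}^∞ ‖T(x_k) - x_k‖² ≤ ‖x_0 - x*‖²/(η(1-η)) for any fixed point x*; in particular ‖T(x_k) - x_k‖ → 0. -/
/-- The Krasnosel'skii–Mann iteration `x_{k+1} = x_k + η (T x_k - x_k)` with
`η ∈ (0,1)` and `T` nonexpansive with fixed point `x*` satisfies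
`∑ₖ ‖T x_k - x_k‖² ≤ ‖x_0 - x*‖² / (η (1-η))`, and in particular
`‖T x_k - x_k‖ → 0`. -/
theorem km_iteration_residual_bound
    {H : Type*} [NormedAddCommGroup H] [InnerProductSpace ℝ H] [CompleteSpace H]
    (T : H → H) (hT : ∀ x y, ‖T x - T y‖ ≤ ‖x - y‖)
    (η : ℝ) (hη₁ : 0 < η) (hη₂ : η < 1)
    (xstar : H) (hfix : T xstar = xstar)
    (x : ℕ → H) (hx : ∀ k, x (k + 1) = x k + η • (T (x k) - x k)) :
    (∑' k : ℕ, ‖T (x k) - x k‖ ^ 2) ≤ ‖x 0 - xstar‖ ^ 2 / (η * (1 - η)) ∧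
    Filter.Tendsto (fun k => ‖T (x k) - x k‖) Filter.atTop (nhds 0) := by
  have hc : 0 < η * (1 - η) := mul_pos hη₁ (by linarith)
  -- key inequality
  have key : ∀ k, η * (1 - η) * ‖T (x k) - x k‖ ^ 2 ≤
      ‖x k - xstar‖ ^ 2 - ‖x (k + 1) - xstar‖ ^ 2 := by
    intro k
    set u := x k - xstar with hu
    set v := T (x k) - x k with hv
    have hinner : 2 * (inner ℝ u v : ℝ) ≤ -‖v‖ ^ 2 := by
      have h1 : ‖T (x k) - xstar‖ ≤ ‖u‖ := by
        have := hT (x k) xstar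
        rwa [hfix] at this
      have h2 : T (x k) - xstar = u + v := by rw [hu, hv]; abel
      have h3 : ‖u + v‖ ^ 2 ≤ ‖u‖ ^ 2 := by
        rw [← h2]; exact pow_le_pow_left₀ (norm_nonneg _) h1 2
      have h4 : ‖u + v‖ ^ 2 = ‖u‖ ^ 2 + 2 * (inner ℝ u v : ℝ) + ‖v‖ ^ 2 := by
        rw [@norm_add_sq_real]
      nlinarith
    have h5 : x (k + 1) - xstar = u + η • v := by rw [hx k, hu, hv]; abel
    have h6 : ‖x (k + 1) - xstar‖ ^ 2
        = ‖u‖ ^ 2 + η * (2 * (inner ℝ u v : ℝ)) + η ^ 2 * ‖v‖ ^ 2 := by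
      rw [h5, @norm_add_sq_real, real_inner_smul_right, norm_smul,
        Real.norm_eq_abs, abs_of_pos hη₁, mul_pow]
      ring
    nlinarith
  have hnn : ∀ k : ℕ, 0 ≤ ‖T (x k) - x k‖ ^ 2 := fun k => sq_nonneg _
  have hsum : ∀ n : ℕ, ∑ k ∈ Finset.range n, ‖T (x k) - x k‖ ^ 2
      ≤ ‖x 0 - xstar‖ ^ 2 / (η * (1 - η)) := by
    intro n
    rw [le_div_iff₀ hc]
    have htel : ∑ k ∈ Finset.range n,
        (‖x k - xstar‖ ^ 2 - ‖x (k + 1) - xstar‖ ^ 2)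
        = ‖x 0 - xstar‖ ^ 2 - ‖x n - xstar‖ ^ 2 := by
      rw [Finset.sum_range_sub' (fun k => ‖x k - xstar‖ ^ 2)]
    have h1 : ∑ k ∈ Finset.range n, η * (1 - η) * ‖T (x k) - x k‖ ^ 2
        ≤ ‖x 0 - xstar‖ ^ 2 - ‖x n - xstar‖ ^ 2 := by
      rw [← htel]
      exact Finset.sum_le_sum fun k _ => key k
    rw [← Finset.mul_sum] at h1
    nlinarith [sq_nonneg ‖x n - xstar‖]
  have hsummable : Summable (fun k : ℕ => ‖T (x k) - x k‖ ^ 2) :=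
    summable_of_sum_range_le hnn hsum
  refine ⟨Summable.tsum_le_of_sum_range_le hsummable hsum, ?_⟩
  have h0 : Filter.Tendsto (fun k => ‖T (x k) - x k‖ ^ 2) Filter.atTop (nhds 0) :=
    hsummable.tendsto_atTop_zero
  have := (Real.continuous_sqrt.continuousAt (x := (0:ℝ))).tendsto.comp h0
  simp only [Real.sqrt_zero, Function.comp] at this
  have heq : (fun k => ‖T (x k) - x k‖)
      = (fun t => Real.sqrt t) ∘ fun k => ‖T (x k) - x k‖ ^ 2 := by
    funext k
    simp [Function.comp, Real.sqrt_sq (norm_nonneg _)]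
  rw [heq]
  exact this
end

section
/- For a convex differentiable f with L-Lipschitz gradient and step 0 < η ≤ 1/L, one step of forward-backward splitting x⁺ = prox_{ηg}(x - η∇f(x)) satisfies the sufficient decrease property: F(x⁺) ≤ F(x) - (1/(2η))‖x⁺ - x‖², where F = f + g. -/
open scoped InnerProductSpace

lemma combo_norm_sq {E : Type*} [NormedAddCommGroup E] [InnerProductSpace ℝ E] (a b : E) (t : ℝ) :
    ‖(1-t)•a + t•b‖^2 = (1-t)*‖a‖^2 + t*‖b‖^2 - t*(1-t)*‖b-a‖^2 := by
  rw [← real_inner_self_eq_norm_sq, ← real_inner_self_eq_norm_sq, ← real_inner_self_eq_norm_sq,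
    ← real_inner_self_eq_norm_sq]
  simp only [inner_add_add_self, inner_sub_sub_self, real_inner_smul_left, real_inner_smul_right,
    real_inner_comm a b]
  ring

/-- Descent lemma. -/
lemma descent_lemma {n : ℕ} (f : EuclideanSpace ℝ (Fin n) → ℝ)
    (f' : EuclideanSpace ℝ (Fin n) → EuclideanSpace ℝ (Fin n)) (L : ℝ)
    (hf' : ∀ x, HasGradientAt f (f' x) x)
    (hlip : ∀ x y, ‖f' x - f' y‖ ≤ L * ‖x - y‖)
    (x y : EuclideanSpace ℝ (Fin n)) :
    f y ≤ f x + ⟪f' x, y - x⟫_ℝ + L / 2 * ‖y - x‖ ^ 2 := by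
  set d := y - x with hd
  set γ : ℝ → EuclideanSpace ℝ (Fin n) := fun t => x + t • d with hγ
  set ψ : ℝ → ℝ := fun t => f (γ t) - t * ⟪f' x, d⟫_ℝ - L / 2 * t ^ 2 * ‖d‖ ^ 2 with hψ
  have hγd : ∀ t : ℝ, HasDerivAt γ d t := fun t => by
    simpa [hγ] using (HasDerivAt.smul_const (hasDerivAt_id t) d).const_add x
  have hψd : ∀ t : ℝ, HasDerivAt ψ (⟪f' (γ t), d⟫_ℝ - ⟪f' x, d⟫_ℝ - L * t * ‖d‖ ^ 2) t := by
    intro t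
    have h1 : HasDerivAt (fun t => f (γ t)) (⟪f' (γ t), d⟫_ℝ) t := by
      have := ((hf' (γ t)).hasFDerivAt).comp_hasDerivAt t (hγd t)
      exact this
    have h2 : HasDerivAt (fun t : ℝ => t * ⟪f' x, d⟫_ℝ) (⟪f' x, d⟫_ℝ) t := by
      simpa using (hasDerivAt_id t).mul_const (⟪f' x, d⟫_ℝ)
    have h3 : HasDerivAt (fun t : ℝ => L / 2 * t ^ 2 * ‖d‖ ^ 2) (L * t * ‖d‖ ^ 2) t := by
      have hp : HasDerivAt (fun t : ℝ => t ^ 2) (2 * t) t := by simpa using hasDerivAt_pow 2 t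
      have := (hp.const_mul (L / 2)).mul_const (‖d‖ ^ 2)
      exact this.congr_deriv (by ring)
    exact (h1.sub h2).sub h3
  have hdiff : Differentiable ℝ ψ := fun t => (hψd t).differentiableAt
  have hmono : AntitoneOn ψ (Set.Icc (0:ℝ) 1) := by
    apply antitoneOn_of_deriv_nonpos (convex_Icc 0 1) hdiff.continuous.continuousOn
      (hdiff.differentiableOn)
    intro t ht
    rw [interior_Icc] at ht
    rw [(hψd t).deriv]
    have h1 : ⟪f' (γ t) - f' x, d⟫_ℝ ≤ ‖f' (γ t) - f' x‖ * ‖d‖ := real_inner_le_norm _ _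
    have h2 : ‖f' (γ t) - f' x‖ ≤ L * (t * ‖d‖) := by
      have := hlip (γ t) x
      simpa [hγ, norm_smul, abs_of_pos ht.1] using this
    have h3 : ‖f' (γ t) - f' x‖ * ‖d‖ ≤ L * (t * ‖d‖) * ‖d‖ :=
      mul_le_mul_of_nonneg_right h2 (norm_nonneg d)
    rw [inner_sub_left] at h1
    nlinarith [h1, h3]
  have h10 : ψ 1 ≤ ψ 0 := hmono (Set.mem_Icc.2 ⟨le_refl 0, zero_le_one⟩)
    (Set.mem_Icc.2 ⟨zero_le_one, le_refl 1⟩) zero_le_one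
  have hγ0 : γ 0 = x := by simp [hγ]
  have hγ1 : γ 1 = y := by simp [hγ, hd]
  simp only [hψ, hγ0, hγ1] at h10
  nlinarith [h10]

set_option maxHeartbeats 1000000 in
/-- Sufficient decrease for one forward-backward step: if `f` is convex with
`L`-Lipschitz gradient, `g` convex, `0 < η ≤ 1/L`, and
`x⁺ = prox_{ηg}(x - η ∇f x)`, then
`F(x⁺) ≤ F(x) - (1/(2η)) ‖x⁺ - x‖²` where `F = f + g`. -/
theorem fbs_sufficient_decrease
    {n : ℕ} (f g : EuclideanSpace ℝ (Fin n) → ℝ)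
    (f' : EuclideanSpace ℝ (Fin n) → EuclideanSpace ℝ (Fin n))
    (L : ℝ) (hL : 0 < L)
    (hf : ConvexOn ℝ Set.univ f)
    (hf' : ∀ x, HasGradientAt f (f' x) x)
    (hlip : ∀ x y, ‖f' x - f' y‖ ≤ L * ‖x - y‖)
    (hg : ConvexOn ℝ Set.univ g)
    (η : ℝ) (hη₁ : 0 < η) (hη₂ : η ≤ 1 / L)
    (x xplus : EuclideanSpace ℝ (Fin n))
    (hmin : ∀ z, g xplus + ‖xplus - (x - η • f' x)‖ ^ 2 / (2 * η)
        ≤ g z + ‖z - (x - η • f' x)‖ ^ 2 / (2 * η)) :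
    f xplus + g xplus ≤ f x + g x - (1 / (2 * η)) * ‖xplus - x‖ ^ 2 := by
  set v := x - η • f' x with hv
  set s := xplus - x with hs
  set D := ‖x - xplus‖ ^ 2 / (2 * η) with hDdef
  have hD : (0:ℝ) ≤ D := by positivity
  have hstrong : g xplus + ‖xplus - v‖ ^ 2 / (2 * η) + D ≤ g x + ‖x - v‖ ^ 2 / (2 * η) := by
    apply le_of_forall_pos_le_add
    intro ε hε
    by_cases hcase : D ≤ ε
    · have := hmin x
      linarith
    · push_neg at hcase
      have hDpos : 0 < D := lt_trans hε hcase
      set t := ε / D with ht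
      have htpos : 0 < t := div_pos hε hDpos
      have ht1 : t < 1 := (div_lt_one hDpos).2 hcase
      have hw := hmin ((1 - t) • xplus + t • x)
      have hgw : g ((1 - t) • xplus + t • x) ≤ (1 - t) * g xplus + t * g x :=
        hg.2 (Set.mem_univ xplus) (Set.mem_univ x) (by linarith) htpos.le (by ring)
      have hnorm : ‖(1 - t) • xplus + t • x - v‖ ^ 2
          = (1 - t) * ‖xplus - v‖ ^ 2 + t * ‖x - v‖ ^ 2 - t * (1 - t) * ‖x - xplus‖ ^ 2 := by
        have hcb := combo_norm_sq (xplus - v) (x - v) t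
        have heq : (1 - t) • xplus + t • x - v = (1 - t) • (xplus - v) + t • (x - v) := by
          module
        have heq2 : x - v - (xplus - v) = x - xplus := by abel
        rw [heq, hcb, heq2]
      rw [hnorm] at hw
      have hsplit : ((1 - t) * ‖xplus - v‖ ^ 2 + t * ‖x - v‖ ^ 2
            - t * (1 - t) * ‖x - xplus‖ ^ 2) / (2 * η)
          = (1 - t) * (‖xplus - v‖ ^ 2 / (2 * η)) + t * (‖x - v‖ ^ 2 / (2 * η))
            - t * (1 - t) * D := by
        rw [hDdef]; ring
      rw [hsplit] at hw
      have hmul : t * (g xplus + ‖xplus - v‖ ^ 2 / (2 * η) + (1 - t) * D)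
          ≤ t * (g x + ‖x - v‖ ^ 2 / (2 * η)) := by nlinarith [hw, hgw]
      have hdiv := (mul_le_mul_iff_right₀ htpos).1 hmul
      have htD : t * D = ε := by rw [ht]; field_simp
      nlinarith [hdiv]
  -- expand norms
  have hxv : ‖x - v‖ ^ 2 = η ^ 2 * ‖f' x‖ ^ 2 := by
    have hxe : x - v = η • f' x := by rw [hv]; abel
    rw [hxe, norm_smul]
    simp [abs_of_pos hη₁]; ring
  have hxpv : ‖xplus - v‖ ^ 2 = ‖s‖ ^ 2 + 2 * η * ⟪f' x, s⟫_ℝ + η ^ 2 * ‖f' x‖ ^ 2 := by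
    have heq : xplus - v = s + η • f' x := by rw [hv, hs]; abel
    rw [heq, norm_add_sq_real, real_inner_smul_right, norm_smul]
    rw [real_inner_comm]
    simp [abs_of_pos hη₁]
    ring
  have hDs : D = ‖s‖ ^ 2 / (2 * η) := by rw [hDdef, hs, norm_sub_rev]
  have hgkey : g xplus ≤ g x - ⟪f' x, s⟫_ℝ - ‖s‖ ^ 2 / η := by
    rw [hxv, hxpv, hDs] at hstrong
    have e1 : (‖s‖ ^ 2 + 2 * η * ⟪f' x, s⟫_ℝ + η ^ 2 * ‖f' x‖ ^ 2) / (2 * η)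
        = ‖s‖ ^ 2 / (2 * η) + ⟪f' x, s⟫_ℝ + η / 2 * ‖f' x‖ ^ 2 := by
      field_simp
    have e2 : η ^ 2 * ‖f' x‖ ^ 2 / (2 * η) = η / 2 * ‖f' x‖ ^ 2 := by
      field_simp
    have e3 : ‖s‖ ^ 2 / η = 2 * (‖s‖ ^ 2 / (2 * η)) := by
      field_simp
    rw [e1, e2] at hstrong
    rw [e3]
    linarith
  have hdesc := descent_lemma f f' L hf' hlip x xplus
  rw [← hs] at hdesc
  have hLη : L * η ≤ 1 := by
    have := (le_div_iff₀ hL).1 hη₂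
    linarith
  have hc : L / 2 ≤ 1 / (2 * η) := by
    rw [div_le_div_iff₀ two_pos (by linarith : (0:ℝ) < 2 * η)]
    have : L * (2 * η) = 2 * (L * η) := by ring
    rw [this]
    linarith
  have hL2 : L / 2 * ‖s‖ ^ 2 ≤ 1 / (2 * η) * ‖s‖ ^ 2 :=
    mul_le_mul_of_nonneg_right hc (by positivity)
  have e4 : ‖s‖ ^ 2 / η = 1 / (2 * η) * ‖s‖ ^ 2 + 1 / (2 * η) * ‖s‖ ^ 2 := by
    field_simp
    ring
  linarith [hdesc, hgkey, hL2]
end
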